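/- Let E_λ be the erasure channel E_λ(ρ) := λρ ⊕ (1−λ)Tr[ρ]|φ⟩⟨φ| from L(H) to L(H ⊕ K), where 0 ≤ λ ≤ 1 and |φ⟩ ∈ K is a unit vector. Then for any game g, U(E_λ, g) = λ·U(id, g) + (1−λ)·max_y Σ_x g_{x,y}, where id is the identity channel on L(H). -/

import Mathlib

open Matrix Kronecker
open scoped ComplexOrder

noncomputable section

variable {n : Type*} [Fintype n] [DecidableEq n]

/-- A density operator: positive semidefinite with unit trace. -/
def IsDensity (ρ : Matrix n n ℂ) : Prop := ρ.PosSemidef ∧ ρ.trace = 1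

/-- A POVM: positive semidefinite effects summing to the identity. -/
def IsPOVM {m : ℕ} (π : Fin m → Matrix n n ℂ) : Prop :=
  (∀ y, (π y).PosSemidef) ∧ ∑ y, π y = 1

/-- The Choi matrix of a map on matrices. -/
def choi {p q : Type*} [Fintype p] [DecidableEq p] [Fintype q] [DecidableEq q]
    (Φ : Matrix p p ℂ → Matrix q q ℂ) : Matrix (p × q) (p × q) ℂ :=
  ∑ i, ∑ j, (Matrix.single i j (1 : ℂ)) ⊗ₖ (Φ (Matrix.single i j (1 : ℂ)))

/-- Completely positive trace preserving linear map. -/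
def IsCPTP {p q : Type*} [Fintype p] [DecidableEq p] [Fintype q] [DecidableEq q]
    (Φ : Matrix p p ℂ → Matrix q q ℂ) : Prop :=
  IsLinearMap ℂ Φ ∧ (choi Φ).PosSemidef ∧ ∀ ρ, (Φ ρ).trace = ρ.trace

/-- The average payoff of game `g`, channel `Φ`, encoding `ρ`, decoding `π`. -/
def payoff {p q : Type*} [Fintype p] [DecidableEq p] [Fintype q] [DecidableEq q]
    {nn m : ℕ} (g : Fin nn → Fin m → ℝ) (Φ : Matrix p p ℂ → Matrix q q ℂ)
    (ρ : Fin nn → Matrix p p ℂ) (π : Fin m → Matrix q q ℂ) : ℝ :=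
  ∑ x, ∑ y, ((Φ (ρ x) * π y).trace).re * g x y

/-- The communication utility of channel `Φ` for game `g`. -/
def utility {p q : Type*} [Fintype p] [DecidableEq p] [Fintype q] [DecidableEq q]
    {nn m : ℕ} (g : Fin nn → Fin m → ℝ) (Φ : Matrix p p ℂ → Matrix q q ℂ) : ℝ :=
  sSup {u : ℝ | ∃ ρ π, (∀ x, IsDensity (ρ x)) ∧ IsPOVM π ∧ u = payoff g Φ ρ π}

/-- The trace norm (sum of singular values). -/
def traceNorm (A : Matrix n n ℂ) : ℝ :=
  ∑ i, Real.sqrt ((Matrix.posSemidef_conjTranspose_mul_self A).1.eigenvalues i)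

/-- Helstrom utility of a channel for the binary discrimination game diag(g₀, 1-g₀). -/
def helstromUtility {p q : Type*} [Fintype p] [DecidableEq p] [Fintype q] [DecidableEq q]
    (Φ : Matrix p p ℂ → Matrix q q ℂ) (g₀ : ℝ) : ℝ :=
  sSup {u : ℝ | ∃ ρ₀ ρ₁, IsDensity ρ₀ ∧ IsDensity ρ₁ ∧
    u = (1 + traceNorm ((g₀ : ℂ) • Φ ρ₀ - ((1 - g₀ : ℝ) : ℂ) • Φ ρ₁)) / 2}

set_option linter.unusedSectionVars false

section AuxStmt3

variable {d e : Type*} [Fintype d] [DecidableEq d] [Fintype e] [DecidableEq e]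

lemma trace_nonneg_of_psd {A : Matrix d d ℂ} (hA : A.PosSemidef) : 0 ≤ A.trace := by
  refine Finset.sum_nonneg fun i _ => ?_
  have h := hA.dotProduct_mulVec_nonneg (Pi.single i 1)
  simpa [Matrix.mulVec_single, dotProduct, Pi.single_apply, apply_ite,
    Finset.sum_ite_eq'] using h

lemma trace_mul_nonneg_of_psd {A B : Matrix d d ℂ} (hA : A.PosSemidef) (hB : B.PosSemidef) :
    0 ≤ (A * B).trace := by
  obtain ⟨P, rfl⟩ : ∃ P : Matrix d d ℂ, A = Pᴴ * P := by
    open scoped MatrixOrder in exact CStarAlgebra.nonneg_iff_eq_star_mul_self.mp hA.nonneg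
  obtain ⟨Q, rfl⟩ : ∃ Q : Matrix d d ℂ, B = Qᴴ * Q := by
    open scoped MatrixOrder in exact CStarAlgebra.nonneg_iff_eq_star_mul_self.mp hB.nonneg
  have h1 : Pᴴ * P * (Qᴴ * Q) = Pᴴ * ((P * Qᴴ) * Q) := by
    simp only [Matrix.mul_assoc]
  have h2 : ((P * Qᴴ) * Q) * Pᴴ = (P * Qᴴ) * (P * Qᴴ)ᴴ := by
    rw [Matrix.conjTranspose_mul, Matrix.conjTranspose_conjTranspose, Matrix.mul_assoc]
  rw [h1, Matrix.trace_mul_comm, h2]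
  exact trace_nonneg_of_psd (Matrix.posSemidef_self_mul_conjTranspose _)

lemma trace_mul_re_nonneg_of_psd {A B : Matrix d d ℂ} (hA : A.PosSemidef) (hB : B.PosSemidef) :
    0 ≤ ((A * B).trace).re := by
  simpa [Complex.le_def] using (Complex.le_def.mp (trace_mul_nonneg_of_psd hA hB)).1

lemma posSemidef_real_smul {A : Matrix d d ℂ} {c : ℝ} (hc : 0 ≤ c) (hA : A.PosSemidef) :
    ((c : ℂ) • A).PosSemidef := by
  refine .of_dotProduct_mulVec_nonneg ?_ fun x => ?_
  · unfold Matrix.IsHermitian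
    rw [Matrix.conjTranspose_smul, hA.1]
    simp
  · rw [Matrix.smul_mulVec, dotProduct_smul, smul_eq_mul]
    exact mul_nonneg (by simpa using Complex.zero_le_real.mpr hc) (hA.dotProduct_mulVec_nonneg x)

lemma posSemidef_vecMulVec_star (φ : d → ℂ) : (Matrix.vecMulVec φ (star φ)).PosSemidef := by
  rw [Matrix.vecMulVec_eq Unit, show Matrix.replicateRow Unit (star φ) = (Matrix.replicateCol Unit φ)ᴴ by
    ext i j; simp]
  exact Matrix.posSemidef_self_mul_conjTranspose _

lemma trace_vecMulVec_star (φ : d → ℂ) :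
    (Matrix.vecMulVec φ (star φ)).trace = star φ ⬝ᵥ φ := by
  simp only [Matrix.trace, Matrix.diag, Matrix.vecMulVec_apply, dotProduct, Pi.star_apply]
  exact Finset.sum_congr rfl fun i _ => mul_comm _ _

lemma trace_fromBlocks' (A : Matrix d d ℂ) (B C) (D : Matrix e e ℂ) :
    (Matrix.fromBlocks A B C D).trace = A.trace + D.trace := by
  simp [Matrix.trace, Fintype.sum_sum_type, Matrix.diag]

lemma sum_fromBlocks {ι : Type*} (s : Finset ι) (A : ι → Matrix d d ℂ) (D : ι → Matrix e e ℂ) :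
    ∑ i ∈ s, Matrix.fromBlocks (A i) 0 0 (D i)
      = Matrix.fromBlocks (∑ i ∈ s, A i) 0 0 (∑ i ∈ s, D i) := by
  ext (i | i) (j | j) <;> simp [Matrix.sum_apply]

lemma posSemidef_fromBlocks {A : Matrix d d ℂ} {D : Matrix e e ℂ}
    (hA : A.PosSemidef) (hD : D.PosSemidef) :
    (Matrix.fromBlocks A 0 0 D).PosSemidef := by
  refine .of_dotProduct_mulVec_nonneg ?_ fun x => ?_
  · unfold Matrix.IsHermitian
    rw [Matrix.fromBlocks_conjTranspose, Matrix.conjTranspose_zero, Matrix.conjTranspose_zero,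
      hA.1, hD.1]
  · have hx : x = Sum.elim (x ∘ Sum.inl) (x ∘ Sum.inr) := by ext (i | i) <;> rfl
    have hs : star x = Sum.elim (star (x ∘ Sum.inl)) (star (x ∘ Sum.inr)) := by
      ext (i | i) <;> rfl
    rw [hs, hx, Matrix.fromBlocks_mulVec]
    simp only [Matrix.zero_mulVec, add_zero, zero_add]
    rw [sumElim_dotProduct_sumElim]
    exact add_nonneg (hA.dotProduct_mulVec_nonneg _) (hD.dotProduct_mulVec_nonneg _)

lemma payoffSet_nonempty {p q : Type*} [Fintype p] [DecidableEq p] [Fintype q] [DecidableEq q]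
    [Nonempty p] {nn m : ℕ} (hm : 0 < m) (g : Fin nn → Fin m → ℝ)
    (Φ : Matrix p p ℂ → Matrix q q ℂ) :
    {u : ℝ | ∃ ρ π, (∀ x, IsDensity (ρ x)) ∧ IsPOVM π ∧ u = payoff g Φ ρ π}.Nonempty := by
  have hcard : (0 : ℝ) < (Fintype.card p : ℝ) := by
    exact_mod_cast Fintype.card_pos
  refine ⟨_, fun _ => ((Fintype.card p : ℂ))⁻¹ • 1,
    fun y => if y = ⟨0, hm⟩ then 1 else 0, fun x => ⟨?_, ?_⟩, ⟨fun y => ?_, ?_⟩, rfl⟩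
  · have : ((Fintype.card p : ℂ))⁻¹ = (((Fintype.card p : ℝ)⁻¹ : ℝ) : ℂ) := by
      push_cast; ring
    rw [this]
    exact posSemidef_real_smul (inv_nonneg.mpr hcard.le) Matrix.PosSemidef.one
  · rw [Matrix.trace_smul, Matrix.trace_one, smul_eq_mul]
    exact inv_mul_cancel₀ (by exact_mod_cast hcard.ne')
  · dsimp only
    split_ifs
    · exact Matrix.PosSemidef.one
    · exact Matrix.PosSemidef.zero
  · simp

lemma payoffSet_bddAbove {p q : Type*} [Fintype p] [DecidableEq p] [Fintype q] [DecidableEq q]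
    {nn m : ℕ} (g : Fin nn → Fin m → ℝ) (Φ : Matrix p p ℂ → Matrix q q ℂ)
    (hΦ : ∀ ρ, IsDensity ρ → (Φ ρ).PosSemidef ∧ (Φ ρ).trace = 1) :
    BddAbove {u : ℝ | ∃ ρ π, (∀ x, IsDensity (ρ x)) ∧ IsPOVM π ∧ u = payoff g Φ ρ π} := by
  refine ⟨∑ x, ∑ y, |g x y|, ?_⟩
  rintro u ⟨ρ, π, hρ, hπ, rfl⟩
  unfold payoff
  refine Finset.sum_le_sum fun x _ => Finset.sum_le_sum fun y _ => ?_
  have hpsd := (hΦ _ (hρ x)).1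
  have htr := (hΦ _ (hρ x)).2
  have ht0 : ∀ y', 0 ≤ ((Φ (ρ x) * π y').trace).re := fun y' =>
    trace_mul_re_nonneg_of_psd hpsd (hπ.1 y')
  have ht1 : ((Φ (ρ x) * π y).trace).re ≤ 1 := by
    have hsum : ∑ y', ((Φ (ρ x) * π y').trace).re = 1 := by
      have h : ∑ y', (Φ (ρ x) * π y').trace = 1 := by
        rw [← Matrix.trace_sum, ← Finset.mul_sum, hπ.2, mul_one, htr]
      rw [← Complex.re_sum, h]
      simp
    calc ((Φ (ρ x) * π y).trace).re
        ≤ ∑ y', ((Φ (ρ x) * π y').trace).re :=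
          Finset.single_le_sum (fun y' _ => ht0 y') (Finset.mem_univ y)
      _ = 1 := hsum
  calc ((Φ (ρ x) * π y).trace).re * g x y
      ≤ ((Φ (ρ x) * π y).trace).re * |g x y| :=
        mul_le_mul_of_nonneg_left (le_abs_self _) (ht0 y)
    _ ≤ 1 * |g x y| := mul_le_mul_of_nonneg_right ht1 (abs_nonneg _)
    _ = |g x y| := one_mul _

end AuxStmt3

/-- utility of the erasure channel. -/
theorem stmt3 {dH dK nn m : ℕ} (hdH : 0 < dH) (hm : 0 < m)
    (l : ℝ) (hl0 : 0 ≤ l) (hl1 : l ≤ 1)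
    (φ : Fin dK → ℂ) (hφ : star φ ⬝ᵥ φ = 1)
    (E : Matrix (Fin dH) (Fin dH) ℂ → Matrix (Fin dH ⊕ Fin dK) (Fin dH ⊕ Fin dK) ℂ)
    (hE : ∀ ρ, E ρ = Matrix.fromBlocks ((l : ℂ) • ρ) 0 0
      ((((1 - l : ℝ) : ℂ) * ρ.trace) • Matrix.vecMulVec φ (star φ)))
    (g : Fin nn → Fin m → ℝ) :
    utility g E
      = l * utility g (id : Matrix (Fin dH) (Fin dH) ℂ → Matrix (Fin dH) (Fin dH) ℂ)
        + (1 - l) * ⨆ y, ∑ x, g x y := by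
  classical
  haveI : Nonempty (Fin m) := ⟨⟨0, hm⟩⟩
  haveI : Nonempty (Fin dH) := ⟨⟨0, hdH⟩⟩
  set Q : Matrix (Fin dK) (Fin dK) ℂ := Matrix.vecMulVec φ (star φ) with hQ
  have hQpsd : Q.PosSemidef := posSemidef_vecMulVec_star φ
  have hQtr : Q.trace = 1 := by rw [hQ, trace_vecMulVec_star, hφ]
  set c : ℝ := ⨆ y, ∑ x, g x y with hc
  obtain ⟨ys, hys⟩ : ∃ y : Fin m, ∑ x, g x y = c := by
    rw [hc]
    exact exists_eq_ciSup_of_finite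
  have hCle : ∀ y : Fin m, ∑ x, g x y ≤ c := by
    intro y
    rw [hc]
    exact le_ciSup (f := fun y => ∑ x, g x y) (Set.Finite.bddAbove (Set.finite_range _)) y
  have hEρ : ∀ ρ : Matrix (Fin dH) (Fin dH) ℂ, IsDensity ρ →
      E ρ = Matrix.fromBlocks ((l : ℂ) • ρ) 0 0 (((1 - l : ℝ) : ℂ) • Q) := by
    intro ρ hρ
    rw [hE, hρ.2, mul_one]
  have hEpsd : ∀ ρ, IsDensity ρ → (E ρ).PosSemidef := by
    intro ρ hρ
    rw [hEρ ρ hρ]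
    exact posSemidef_fromBlocks (posSemidef_real_smul hl0 hρ.1)
      (posSemidef_real_smul (by linarith) hQpsd)
  have hEtr : ∀ ρ, IsDensity ρ → (E ρ).trace = 1 := by
    intro ρ hρ
    rw [hEρ ρ hρ, trace_fromBlocks', Matrix.trace_smul, Matrix.trace_smul, hρ.2, hQtr]
    simp only [smul_eq_mul, mul_one]
    push_cast
    ring
  set SI : Set ℝ := {u : ℝ | ∃ ρ π, (∀ x, IsDensity (ρ x)) ∧ IsPOVM π ∧
    u = payoff g (id : Matrix (Fin dH) (Fin dH) ℂ → Matrix (Fin dH) (Fin dH) ℂ) ρ π} with hSI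
  set SE : Set ℝ := {u : ℝ | ∃ ρ π, (∀ x, IsDensity (ρ x)) ∧ IsPOVM π ∧
    u = payoff g E ρ π} with hSE
  have hSIne : SI.Nonempty := payoffSet_nonempty hm g _
  have hSIbdd : BddAbove SI := payoffSet_bddAbove g _ (fun ρ hρ => ⟨hρ.1, hρ.2⟩)
  have hSEne : SE.Nonempty := payoffSet_nonempty hm g E
  have hSEbdd : BddAbove SE := payoffSet_bddAbove g E (fun ρ hρ => ⟨hEpsd ρ hρ, hEtr ρ hρ⟩)
  -- Lower bound: transported payoffs
  have hlow : ∀ u ∈ SI, l * u + (1 - l) * c ∈ SE := by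
    rintro u ⟨ρ, π, hρ, hπ, rfl⟩
    refine ⟨ρ, fun y => Matrix.fromBlocks (π y) 0 0 (if y = ys then 1 else 0), hρ,
      ⟨fun y => ?_, ?_⟩, ?_⟩
    · refine posSemidef_fromBlocks (hπ.1 y) ?_
      split_ifs
      · exact Matrix.PosSemidef.one
      · exact Matrix.PosSemidef.zero
    · rw [sum_fromBlocks, hπ.2]
      have : ∑ y : Fin m, (if y = ys then (1 : Matrix (Fin dK) (Fin dK) ℂ) else 0) = 1 := by
        simp
      rw [this, Matrix.fromBlocks_one]
    · have hterm : ∀ x y, ((E (ρ x) *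
          Matrix.fromBlocks (π y) 0 0 (if y = ys then 1 else 0)).trace).re
          = l * ((ρ x * π y).trace).re + (1 - l) * (if y = ys then 1 else 0) := by
        intro x y
        rw [hEρ _ (hρ x), Matrix.fromBlocks_multiply, trace_fromBlocks']
        simp only [Matrix.zero_mul, Matrix.mul_zero, add_zero, zero_add,
          Matrix.smul_mul, Matrix.trace_smul, mul_ite, mul_one, mul_zero,
          Matrix.mul_one, smul_eq_mul]
        split_ifs <;>
          simp [Complex.add_re, Complex.re_ofReal_mul, hQtr]
      unfold payoff
      have hswap : ∑ x, ∑ y, ((E (ρ x) *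
            Matrix.fromBlocks (π y) 0 0 (if y = ys then 1 else 0)).trace).re * g x y
          = ∑ x, ∑ y, (l * ((ρ x * π y).trace).re * g x y
              + (1 - l) * ((if y = ys then (1:ℝ) else 0) * g x y)) := by
        refine Finset.sum_congr rfl fun x _ => Finset.sum_congr rfl fun y _ => ?_
        rw [hterm x y]
        ring
      have hsplit : ∑ x, ∑ y, (l * ((ρ x * π y).trace).re * g x y
              + (1 - l) * ((if y = ys then (1:ℝ) else 0) * g x y))
          = l * (∑ x, ∑ y, ((ρ x * π y).trace).re * g x y) + (1 - l) * ∑ x, g x ys := by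
        rw [Finset.sum_congr rfl (fun x _ => Finset.sum_add_distrib), Finset.sum_add_distrib]
        congr 1
        · rw [Finset.mul_sum]
          refine Finset.sum_congr rfl fun x _ => ?_
          rw [Finset.mul_sum]
          exact Finset.sum_congr rfl fun y _ => by ring
        · rw [Finset.mul_sum]
          refine Finset.sum_congr rfl fun x _ => ?_
          rw [← Finset.mul_sum]
          congr 1
          simp
      rw [hswap, hsplit, ← hys]
      rfl
  -- Upper bound
  have hup : ∀ u ∈ SE, u ≤ l * sSup SI + (1 - l) * c := by
    rintro u ⟨ρ, π, hρ, hπ, rfl⟩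
    set π1 : Fin m → Matrix (Fin dH) (Fin dH) ℂ := fun y => (π y).toBlocks₁₁ with hπ1
    set π2 : Fin m → Matrix (Fin dK) (Fin dK) ℂ := fun y => (π y).toBlocks₂₂ with hπ2
    have hπ1psd : ∀ y, (π1 y).PosSemidef := fun y => (hπ.1 y).submatrix Sum.inl
    have hπ2psd : ∀ y, (π2 y).PosSemidef := fun y => (hπ.1 y).submatrix Sum.inr
    have hπ1sum : ∑ y, π1 y = 1 := by
      ext i j
      have h := congrFun (congrFun hπ.2 (Sum.inl i)) (Sum.inl j)
      simpa [Matrix.sum_apply, Matrix.one_apply, hπ1, Matrix.toBlocks₁₁] using h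
    have hπ2sum : ∑ y, π2 y = 1 := by
      ext i j
      have h := congrFun (congrFun hπ.2 (Sum.inr i)) (Sum.inr j)
      simpa [Matrix.sum_apply, Matrix.one_apply, hπ2, Matrix.toBlocks₂₂] using h
    have hp0 : ∀ y, 0 ≤ ((Q * π2 y).trace).re := fun y =>
      trace_mul_re_nonneg_of_psd hQpsd (hπ2psd y)
    have hpsum : ∑ y, ((Q * π2 y).trace).re = 1 := by
      have h : ∑ y, (Q * π2 y).trace = 1 := by
        rw [← Matrix.trace_sum, ← Finset.mul_sum, hπ2sum, mul_one, hQtr]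
      rw [← Complex.re_sum, h]
      simp
    have hterm : ∀ x y, ((E (ρ x) * π y).trace).re
        = l * ((ρ x * π1 y).trace).re + (1 - l) * ((Q * π2 y).trace).re := by
      intro x y
      conv_lhs => rw [hEρ _ (hρ x), ← Matrix.fromBlocks_toBlocks (π y),
        Matrix.fromBlocks_multiply]
      rw [trace_fromBlocks']
      simp only [Matrix.zero_mul, Matrix.mul_zero, add_zero, zero_add,
        Matrix.smul_mul, Matrix.trace_smul, smul_eq_mul]
      rw [Complex.add_re, Complex.re_ofReal_mul, Complex.re_ofReal_mul]
    have hkey : payoff g E ρ π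
        = l * payoff g (id : Matrix (Fin dH) (Fin dH) ℂ → Matrix (Fin dH) (Fin dH) ℂ) ρ π1
          + (1 - l) * ∑ y, ((Q * π2 y).trace).re * ∑ x, g x y := by
      unfold payoff
      have h1 : ∑ x, ∑ y, ((E (ρ x) * π y).trace).re * g x y
          = ∑ x, ∑ y, (l * (((ρ x * π1 y).trace).re * g x y)
              + (1 - l) * (((Q * π2 y).trace).re * g x y)) := by
        refine Finset.sum_congr rfl fun x _ => Finset.sum_congr rfl fun y _ => ?_
        rw [hterm x y]
        ring
      rw [h1, Finset.sum_congr rfl (fun x _ => Finset.sum_add_distrib),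
        Finset.sum_add_distrib]
      congr 1
      · rw [Finset.mul_sum]
        refine Finset.sum_congr rfl fun x _ => ?_
        rw [Finset.mul_sum]
        rfl
      · rw [Finset.sum_comm, Finset.mul_sum]
        refine Finset.sum_congr rfl fun y _ => ?_
        rw [← Finset.mul_sum, ← Finset.mul_sum]
    rw [hkey]
    have h2 : payoff g (id : Matrix (Fin dH) (Fin dH) ℂ → Matrix (Fin dH) (Fin dH) ℂ) ρ π1
        ≤ sSup SI := le_csSup hSIbdd ⟨ρ, π1, hρ, ⟨hπ1psd, hπ1sum⟩, rfl⟩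
    have h3 : ∑ y, ((Q * π2 y).trace).re * ∑ x, g x y ≤ c := by
      calc ∑ y, ((Q * π2 y).trace).re * ∑ x, g x y
          ≤ ∑ y, ((Q * π2 y).trace).re * c :=
            Finset.sum_le_sum fun y _ => mul_le_mul_of_nonneg_left (hCle y) (hp0 y)
        _ = c := by rw [← Finset.sum_mul, hpsum, one_mul]
    exact add_le_add (mul_le_mul_of_nonneg_left h2 hl0)
      (mul_le_mul_of_nonneg_left h3 (by linarith))
  -- Assemble
  show sSup SE = l * sSup SI + (1 - l) * c
  apply le_antisymm
  · exact csSup_le hSEne hup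
  · rcases eq_or_lt_of_le hl0 with h0 | h0
    · obtain ⟨u, hu⟩ := hSIne
      have h := le_csSup hSEbdd (hlow u hu)
      rw [← h0] at h ⊢
      simpa using h
    · have h1 : sSup SI ≤ (sSup SE - (1 - l) * c) / l := by
        refine csSup_le hSIne fun u hu => ?_
        have h := le_csSup hSEbdd (hlow u hu)
        rw [le_div_iff₀ h0]
        linarith
      have h2 := mul_le_mul_of_nonneg_left h1 hl0
      rw [mul_div_cancel₀ _ h0.ne'] at h2
      linarith

end
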